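/- The tilted weight tends to one at infinity: if α* > 1/2, then for every ε > 0 there exists M > 0 such that for every θ with |θ| ≥ M and every a ∈ (0,1) with G(θ, a) = α*, one has a > 1 - ε. -/

import Mathlib

open MeasureTheory

/-- The standard Gaussian density. -/
noncomputable def stdGauss (y : ℝ) : ℝ :=
  (Real.sqrt (2 * Real.pi))⁻¹ * Real.exp (-y ^ 2 / 2)

/-- Density of the two-component mixture `α*·N(θ*,1) + (1-α*)·N(-θ*,1)`. -/
noncomputable def mixDen (θs αs y : ℝ) : ℝ :=
  αs * stdGauss (y - θs) + (1 - αs) * stdGauss (y + θs)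

/-- The EM/Sinkhorn-EM map `F(θ, α)`. -/
noncomputable def Fmap (θs αs θ α : ℝ) : ℝ :=
  ∫ y, y * (α * Real.exp (θ * y) - (1 - α) * Real.exp (-(θ * y))) /
      (α * Real.exp (θ * y) + (1 - α) * Real.exp (-(θ * y))) * mixDen θs αs y

/-- The tilting equation map `G(θ, α)`. -/
noncomputable def Gmap (θs αs θ α : ℝ) : ℝ :=
  ∫ y, α * Real.exp (θ * y) /
      (α * Real.exp (θ * y) + (1 - α) * Real.exp (-(θ * y))) * mixDen θs αs y

/-- The (normalized) `θ`-derivative of the tilting equation, `G_θ(θ, α)`. -/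
noncomputable def Gtheta (θs αs θ α : ℝ) : ℝ :=
  ∫ y, y / (α * Real.exp (θ * y) + (1 - α) * Real.exp (-(θ * y))) ^ 2 * mixDen θs αs y

open Real Set

lemma stdGauss_pos (y : ℝ) : 0 < stdGauss y := by
  unfold stdGauss
  positivity

lemma sqrt_two_pi_ge : (2:ℝ) ≤ Real.sqrt (2 * Real.pi) := by
  have : (4:ℝ) ≤ 2 * Real.pi := by nlinarith [Real.pi_gt_three]
  nlinarith [Real.sq_sqrt (by positivity : (0:ℝ) ≤ 2 * Real.pi), Real.sqrt_nonneg (2*Real.pi)]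

lemma stdGauss_le_half (y : ℝ) : stdGauss y ≤ 1/2 := by
  unfold stdGauss
  have h1 : Real.exp (-y ^ 2 / 2) ≤ 1 := by
    rw [← Real.exp_zero]; apply Real.exp_le_exp.2; nlinarith [sq_nonneg y]
  have h2 : (Real.sqrt (2 * Real.pi))⁻¹ ≤ 1/2 := by
    have h := sqrt_two_pi_ge
    rw [inv_le_comm₀ (by positivity) (by norm_num)]
    linarith
  calc (Real.sqrt (2 * Real.pi))⁻¹ * Real.exp (-y ^ 2 / 2) ≤ (Real.sqrt (2 * Real.pi))⁻¹ * 1 := by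
        gcongr
    _ ≤ 1/2 := by simpa using h2

lemma integrable_stdGauss : Integrable stdGauss := by
  have : Integrable (fun y : ℝ => Real.exp (-(1/2) * y ^ 2)) := integrable_exp_neg_mul_sq (by norm_num)
  have h := this.const_mul (Real.sqrt (2 * Real.pi))⁻¹
  refine h.congr (by filter_upwards with y; unfold stdGauss; ring_nf)

lemma integral_stdGauss : ∫ y, stdGauss y = 1 := by
  have h : ∫ y : ℝ, Real.exp (-(1/2) * y ^ 2) = Real.sqrt (Real.pi / (1/2)) := integral_gaussian (1/2)
  have h2 : ∫ y, stdGauss y = (Real.sqrt (2 * Real.pi))⁻¹ * ∫ y : ℝ, Real.exp (-(1/2) * y ^ 2) := by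
    rw [← integral_const_mul]; congr 1; ext y; unfold stdGauss; ring_nf
  rw [h2, h]
  rw [show Real.pi / (1/2) = 2 * Real.pi by ring]
  rw [inv_mul_cancel₀]
  positivity

lemma map_sub_self (t : ℝ) : Measure.map (fun x : ℝ => x - t) volume = volume := by
  simp_rw [sub_eq_add_neg]
  exact map_add_right_eq_self volume (-t)

lemma setIntegral_Ioi_sub (f : ℝ → ℝ) (t : ℝ) (c : ℝ) :
    ∫ y in Set.Ioi c, f (y - t) = ∫ y in Set.Ioi (c - t), f y := by
  have A : MeasurableEmbedding fun x : ℝ => x - t :=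
    (Homeomorph.subRight t).isClosedEmbedding.measurableEmbedding
  have h := A.setIntegral_map (μ := volume) f (Ioi (c - t))
  rw [map_sub_self] at h
  rw [h]
  congr 1
  ext y
  simp [lt_sub_iff_add_lt, sub_lt_sub_iff_right]

lemma setIntegral_Iio_sub (f : ℝ → ℝ) (t : ℝ) (c : ℝ) :
    ∫ y in Set.Iio c, f (y - t) = ∫ y in Set.Iio (c - t), f y := by
  have A : MeasurableEmbedding fun x : ℝ => x - t :=
    (Homeomorph.subRight t).isClosedEmbedding.measurableEmbedding
  have h := A.setIntegral_map (μ := volume) f (Iio (c - t))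
  rw [map_sub_self] at h
  rw [h]
  congr 1
  ext y
  simp [sub_lt_sub_iff_right]

lemma stdGauss_even (y : ℝ) : stdGauss (-y) = stdGauss y := by
  unfold stdGauss; rw [neg_pow]; ring_nf

lemma setIntegral_stdGauss_pos (s : Set ℝ) (hs : MeasurableSet s) (hpos : 0 < volume s) :
    0 < ∫ y in s, stdGauss y := by
  rw [setIntegral_pos_iff_support_of_nonneg_ae
    (Filter.Eventually.of_forall fun y => (stdGauss_pos y).le)
    integrable_stdGauss.integrableOn]
  have : Function.support stdGauss = Set.univ := by
    ext y; simp [Function.mem_support, (stdGauss_pos y).ne']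
  rw [this, Set.univ_inter]
  simpa using hpos

-- T
lemma Iic_add_Ioi_stdGauss (c : ℝ) :
    (∫ y in Iic c, stdGauss y) + ∫ y in Ioi c, stdGauss y = 1 := by
  have := integral_add_compl (measurableSet_Iic (a := c)) integrable_stdGauss
  rw [compl_Iic, integral_stdGauss] at this
  exact this

lemma stdGauss_Iic_neg (c : ℝ) :
    ∫ y in Iic (-c), stdGauss y = ∫ y in Ioi c, stdGauss y := by
  have h : ∫ y in Iic (-c), stdGauss y = ∫ y in Iic (-c), stdGauss (-y) := by
    simp_rw [stdGauss_even]
  rw [h, integral_comp_neg_Iic, neg_neg]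


lemma integrable_mixDen (θs αs : ℝ) : Integrable (mixDen θs αs) := by
  unfold mixDen
  exact ((integrable_stdGauss.comp_sub_right θs).const_mul αs).add
    (((integrable_stdGauss.comp_sub_right (-θs)).const_mul (1-αs)).congr
      (by filter_upwards with y; simp [sub_neg_eq_add]))

lemma Pplus_eq (θs αs : ℝ) :
    ∫ y in Ioi (0:ℝ), mixDen θs αs y
      = αs * (1 - ∫ y in Ioi θs, stdGauss y) + (1 - αs) * (∫ y in Ioi θs, stdGauss y) := by
  unfold mixDen
  rw [integral_add, integral_const_mul, integral_const_mul]
  · have h1 : ∫ y in Ioi (0:ℝ), stdGauss (y - θs) = 1 - ∫ y in Ioi θs, stdGauss y := by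
      rw [setIntegral_Ioi_sub, zero_sub]
      have := Iic_add_Ioi_stdGauss (-θs)
      rw [stdGauss_Iic_neg] at this
      linarith
    have h2 : ∫ y in Ioi (0:ℝ), stdGauss (y + θs) = ∫ y in Ioi θs, stdGauss y := by
      have : ∀ y : ℝ, stdGauss (y + θs) = stdGauss (y - (-θs)) := by intro y; rw [sub_neg_eq_add]
      simp_rw [this, setIntegral_Ioi_sub, zero_sub, neg_neg]
    rw [h1, h2]
  · exact ((integrable_stdGauss.comp_sub_right θs).const_mul αs).integrableOn
  · refine (((integrable_stdGauss.comp_sub_right (-θs)).const_mul (1-αs)).congr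
      (by filter_upwards with y; simp [sub_neg_eq_add])).integrableOn

lemma Pminus_eq (θs αs : ℝ) :
    ∫ y in Iio (0:ℝ), mixDen θs αs y
      = αs * (∫ y in Ioi θs, stdGauss y) + (1 - αs) * (1 - ∫ y in Ioi θs, stdGauss y) := by
  unfold mixDen
  rw [integral_add, integral_const_mul, integral_const_mul]
  · have h1 : ∫ y in Iio (0:ℝ), stdGauss (y - θs) = ∫ y in Ioi θs, stdGauss y := by
      rw [setIntegral_Iio_sub, zero_sub, ← integral_Iic_eq_integral_Iio, stdGauss_Iic_neg]
    have h2 : ∫ y in Iio (0:ℝ), stdGauss (y + θs) = 1 - ∫ y in Ioi θs, stdGauss y := by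
      have : ∀ y : ℝ, stdGauss (y + θs) = stdGauss (y - (-θs)) := by intro y; rw [sub_neg_eq_add]
      simp_rw [this, setIntegral_Iio_sub, zero_sub, neg_neg, ← integral_Iic_eq_integral_Iio]
      have := Iic_add_Ioi_stdGauss θs
      linarith
    rw [h1, h2]
  · exact ((integrable_stdGauss.comp_sub_right θs).const_mul αs).integrableOn
  · refine (((integrable_stdGauss.comp_sub_right (-θs)).const_mul (1-αs)).congr
      (by filter_upwards with y; simp [sub_neg_eq_add])).integrableOn

lemma T_pos (θs : ℝ) : 0 < ∫ y in Ioi θs, stdGauss y :=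
  setIntegral_stdGauss_pos _ measurableSet_Ioi (by simp)

lemma T_lt_one (θs : ℝ) : (∫ y in Ioi θs, stdGauss y) < 1 := by
  have h := Iic_add_Ioi_stdGauss θs
  have := setIntegral_stdGauss_pos (Iic θs) measurableSet_Iic (by simp)
  linarith

noncomputable def vfun (a u : ℝ) : ℝ :=
  a * Real.exp u / (a * Real.exp u + (1 - a) * Real.exp (-u))

lemma vden_pos {a : ℝ} (ha : 0 < a) (ha1 : a < 1) (u : ℝ) :
    0 < a * Real.exp u + (1 - a) * Real.exp (-u) := by
  have := Real.exp_pos u; have := Real.exp_pos (-u); nlinarith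

lemma vfun_nonneg {a : ℝ} (ha : 0 < a) (ha1 : a < 1) (u : ℝ) : 0 ≤ vfun a u := by
  unfold vfun
  have := vden_pos ha ha1 u
  positivity

lemma vfun_le_one {a : ℝ} (ha : 0 < a) (ha1 : a < 1) (u : ℝ) : vfun a u ≤ 1 := by
  unfold vfun
  rw [div_le_one (vden_pos ha ha1 u)]
  nlinarith [Real.exp_pos (-u)]

lemma vfun_mono {a : ℝ} (ha : 0 < a) (ha1 : a < 1) {u v : ℝ} (huv : u ≤ v) :
    vfun a u ≤ vfun a v := by
  unfold vfun
  rw [div_le_div_iff₀ (vden_pos ha ha1 u) (vden_pos ha ha1 v)]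
  have key : Real.exp u * Real.exp (-v) ≤ Real.exp v * Real.exp (-u) := by
    rw [← Real.exp_add, ← Real.exp_add]
    apply Real.exp_le_exp.2; linarith
  nlinarith [mul_le_mul_of_nonneg_left key
    (by nlinarith : (0:ℝ) ≤ a * (1 - a)), Real.exp_pos u, Real.exp_pos v]

lemma mixDen_nonneg (θs : ℝ) {αs : ℝ} (h0 : 0 ≤ αs) (h1 : αs ≤ 1) (y : ℝ) : 0 ≤ mixDen θs αs y := by
  unfold mixDen
  have := stdGauss_pos (y - θs); have := stdGauss_pos (y + θs); nlinarith

lemma mixDen_le_half (θs : ℝ) {αs : ℝ} (h0 : 0 ≤ αs) (h1 : αs ≤ 1) (y : ℝ) : mixDen θs αs y ≤ 1/2 := by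
  unfold mixDen
  have := stdGauss_le_half (y - θs); have := stdGauss_le_half (y + θs)
  have := stdGauss_pos (y - θs); have := stdGauss_pos (y + θs)
  nlinarith

lemma integral_mixDen {θs αs : ℝ} : ∫ y, mixDen θs αs y = 1 := by
  unfold mixDen
  rw [integral_add, integral_const_mul, integral_const_mul]
  · have h1 : ∫ y, stdGauss (y - θs) = 1 := by
      rw [integral_sub_right_eq_self stdGauss θs, integral_stdGauss]
    have h2 : ∫ y, stdGauss (y + θs) = 1 := by
      rw [integral_add_right_eq_self stdGauss θs, integral_stdGauss]
    rw [h1, h2]; ring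
  · exact (integrable_stdGauss.comp_sub_right θs).const_mul αs
  · refine ((integrable_stdGauss.comp_sub_right (-θs)).const_mul (1-αs)).congr
      (by filter_upwards with y; simp [sub_neg_eq_add])

lemma continuous_vcomp {a : ℝ} (ha : 0 < a) (ha1 : a < 1) (θ : ℝ) :
    Continuous (fun y : ℝ => vfun a (θ * y)) := by
  unfold vfun
  refine Continuous.div (by continuity) (by continuity) fun y => (vden_pos ha ha1 (θ*y)).ne'

lemma integrable_vmix {θs αs a : ℝ} (ha : 0 < a) (ha1 : a < 1) (θ : ℝ) :
    Integrable (fun y => vfun a (θ * y) * mixDen θs αs y) :=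
  (integrable_mixDen θs αs).bdd_mul (continuous_vcomp ha ha1 θ).aestronglyMeasurable
    (c := 1) (Filter.Eventually.of_forall fun y => by
      rw [Real.norm_eq_abs, abs_of_nonneg (vfun_nonneg ha ha1 _)]
      exact vfun_le_one ha ha1 _)

lemma Gmap_eq (θs αs θ a : ℝ) : Gmap θs αs θ a = ∫ y, vfun a (θ * y) * mixDen θs αs y := rfl

-- set integral small interval bound
lemma setIntegral_mixDen_le (θs : ℝ) {αs : ℝ} (h0 : 0 ≤ αs) (h1 : αs ≤ 1) {c d : ℝ} (hcd : c ≤ d) :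
    ∫ y in Ioc c d, mixDen θs αs y ≤ (d - c) / 2 := by
  have h : ∫ y in Ioc c d, mixDen θs αs y ≤ ∫ _y in Ioc c d, (1/2:ℝ) := by
    apply setIntegral_mono_on (integrable_mixDen θs αs).integrableOn
      (integrableOn_const (by simp))
      measurableSet_Ioc (fun y _ => mixDen_le_half θs h0 h1 y)
  rw [setIntegral_const] at h
  rw [Real.volume_real_Ioc_of_le hcd] at h
  calc ∫ y in Ioc c d, mixDen θs αs y ≤ (d - c) • (1/2:ℝ) := h
    _ = (d - c)/2 := by rw [smul_eq_mul]; ring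

lemma key_pos (θs αs θ a δ : ℝ) (h0 : 0 ≤ αs) (h1 : αs ≤ 1)
    (hθ : 0 < θ) (ha : 0 < a) (ha1 : a < 1) (hδ : 0 < δ) :
    Gmap θs αs θ a ≤ (∫ y in Ioi (0:ℝ), mixDen θs αs y) + δ/2 + vfun a (-(θ * δ)) := by
  set s := vfun a (-(θ * δ)) with hs
  have hsnn : 0 ≤ s := vfun_nonneg ha ha1 _
  rw [Gmap_eq]
  have hbound : ∀ y : ℝ, vfun a (θ * y) * mixDen θs αs y
      ≤ (Ioi (-δ)).indicator (mixDen θs αs) y + s * mixDen θs αs y := by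
    intro y
    have hq := mixDen_nonneg θs h0 h1 y
    by_cases hy : y ∈ Ioi (-δ)
    · rw [Set.indicator_of_mem hy]
      nlinarith [vfun_le_one ha ha1 (θ * y), vfun_nonneg ha ha1 (θ * y),
        mul_nonneg hsnn hq]
    · rw [Set.indicator_of_notMem hy]
      have hyle : y ≤ -δ := by simpa [Set.mem_Ioi, not_lt] using hy
      have : vfun a (θ * y) ≤ s := by
        rw [hs]; exact vfun_mono ha ha1 (by nlinarith)
      nlinarith
  have hint1 : Integrable fun y => (Ioi (-δ)).indicator (mixDen θs αs) y + s * mixDen θs αs y :=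
    ((integrable_mixDen θs αs).indicator measurableSet_Ioi).add
      ((integrable_mixDen θs αs).const_mul s)
  have hmono := integral_mono (integrable_vmix ha ha1 θ) hint1 hbound
  rw [integral_add ((integrable_mixDen θs αs).indicator measurableSet_Ioi)
      ((integrable_mixDen θs αs).const_mul s), integral_indicator measurableSet_Ioi,
      integral_const_mul, integral_mixDen, mul_one] at hmono
  have hsplit : ∫ y in Ioi (-δ), mixDen θs αs y
      = (∫ y in Ioc (-δ) 0, mixDen θs αs y) + ∫ y in Ioi (0:ℝ), mixDen θs αs y := by
    rw [← setIntegral_union (Set.Ioc_disjoint_Ioi le_rfl) measurableSet_Ioi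
      (integrable_mixDen θs αs).integrableOn (integrable_mixDen θs αs).integrableOn]
    rw [Set.Ioc_union_Ioi_eq_Ioi (by linarith)]
  have hsmall := setIntegral_mixDen_le θs h0 h1 (show -δ ≤ (0:ℝ) by linarith)
  rw [hsplit] at hmono
  have : (0:ℝ) - (-δ) = δ := by ring
  rw [this] at hsmall
  linarith

lemma key_neg (θs αs θ a δ : ℝ) (h0 : 0 ≤ αs) (h1 : αs ≤ 1)
    (hθ : θ < 0) (ha : 0 < a) (ha1 : a < 1) (hδ : 0 < δ) :
    Gmap θs αs θ a ≤ (∫ y in Iio (0:ℝ), mixDen θs αs y) + δ/2 + vfun a (θ * δ) := by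
  set s := vfun a (θ * δ) with hs
  have hsnn : 0 ≤ s := vfun_nonneg ha ha1 _
  rw [Gmap_eq]
  have hbound : ∀ y : ℝ, vfun a (θ * y) * mixDen θs αs y
      ≤ (Iio δ).indicator (mixDen θs αs) y + s * mixDen θs αs y := by
    intro y
    have hq := mixDen_nonneg θs h0 h1 y
    by_cases hy : y ∈ Iio δ
    · rw [Set.indicator_of_mem hy]
      nlinarith [vfun_le_one ha ha1 (θ * y), vfun_nonneg ha ha1 (θ * y),
        mul_nonneg hsnn hq]
    · rw [Set.indicator_of_notMem hy]
      have hyle : δ ≤ y := by simpa [Set.mem_Iio, not_lt] using hy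
      have : vfun a (θ * y) ≤ s := by
        rw [hs]; exact vfun_mono ha ha1 (by nlinarith)
      nlinarith
  have hint1 : Integrable fun y => (Iio δ).indicator (mixDen θs αs) y + s * mixDen θs αs y :=
    ((integrable_mixDen θs αs).indicator measurableSet_Iio).add
      ((integrable_mixDen θs αs).const_mul s)
  have hmono := integral_mono (integrable_vmix ha ha1 θ) hint1 hbound
  rw [integral_add ((integrable_mixDen θs αs).indicator measurableSet_Iio)
      ((integrable_mixDen θs αs).const_mul s), integral_indicator measurableSet_Iio,
      integral_const_mul, integral_mixDen, mul_one] at hmono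
  have hsplit : ∫ y in Iio δ, mixDen θs αs y
      = (∫ y in Iio (0:ℝ), mixDen θs αs y) + ∫ y in Ico 0 δ, mixDen θs αs y := by
    rw [← setIntegral_union ((Set.Iio_disjoint_Ici le_rfl).mono_right Set.Ico_subset_Ici_self) measurableSet_Ico
      (integrable_mixDen θs αs).integrableOn (integrable_mixDen θs αs).integrableOn]
    rw [Set.Iio_union_Ico_eq_Iio (by linarith)]
  have hsmall : ∫ y in Ico 0 δ, mixDen θs αs y ≤ δ/2 := by
    have h1' : ∫ y in Ico (0:ℝ) δ, mixDen θs αs y = ∫ y in Ioc (0:ℝ) δ, mixDen θs αs y := by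
      rw [← integral_Icc_eq_integral_Ioc, ← integral_Icc_eq_integral_Ico]
    rw [h1']
    have := setIntegral_mixDen_le θs h0 h1 (le_of_lt hδ) (c := 0) (d := δ)
    simpa using this
  rw [hsplit] at hmono
  linarith

lemma weight_large {a η u : ℝ} (ha : 0 < a) (ha1 : a < 1) (hη : 0 < η) (hη1 : η ≤ 1)
    (hu : 0 ≤ u) (hs : η ≤ vfun a (-u)) : 1 - a ≤ Real.exp (-(2*u)) / η := by
  have hE : (0:ℝ) < Real.exp (-u) := Real.exp_pos _
  have hE' : (0:ℝ) < Real.exp u := Real.exp_pos _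
  have hEE' : Real.exp (-u) * Real.exp u = 1 := by
    rw [← Real.exp_add]; simp
  have hden := vden_pos ha ha1 (-u)
  rw [neg_neg] at hden
  rw [vfun, neg_neg, le_div_iff₀ hden] at hs
  have hE1 : Real.exp (-u) ≤ 1 := by
    rw [show (1:ℝ) = Real.exp 0 by simp]; exact Real.exp_le_exp.2 (by linarith)
  have step : η * (1 - a) * Real.exp u ≤ Real.exp (-u) := by
    nlinarith [mul_le_mul_of_nonneg_right (show a*(1-η) ≤ 1 by nlinarith) hE.le]
  have h2 : Real.exp (-(2*u)) = Real.exp (-u) * Real.exp (-u) := by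
    rw [← Real.exp_add]; ring_nf
  rw [le_div_iff₀ hη, h2]
  nlinarith [mul_le_mul_of_nonneg_right step hE.le]

theorem tilted_weight_tendsto_one'
    (θs αs : ℝ) (hθs : 0 < θs) (hαs : 1 / 2 < αs) (hαs1 : αs < 1) :
    ∀ ε > (0 : ℝ), ∃ M > (0 : ℝ), ∀ θ : ℝ, M ≤ |θ| →
      ∀ a ∈ Set.Ioo (0 : ℝ) 1, Gmap θs αs θ a = αs → 1 - ε < a := by
  intro ε hε
  obtain ⟨T, hT⟩ : ∃ x, x = ∫ y in Ioi θs, stdGauss y := ⟨_, rfl⟩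
  have hT0 : 0 < T := hT ▸ T_pos θs
  have hT1 : T < 1 := hT ▸ T_lt_one θs
  obtain ⟨η0, hη0def⟩ : ∃ x, x = (2*αs - 1) * min T (1 - T) := ⟨_, rfl⟩
  have hmin0 : 0 < min T (1 - T) := lt_min hT0 (by linarith)
  have hmin1 : min T (1 - T) ≤ T := min_le_left _ _
  have hmin2 : min T (1 - T) ≤ 1 - T := min_le_right _ _
  have hη0 : 0 < η0 := hη0def ▸ mul_pos (by linarith) hmin0
  obtain ⟨η, hηdef⟩ : ∃ x, x = η0 / 2 := ⟨_, rfl⟩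
  have hη : 0 < η := by rw [hηdef]; positivity
  have hη1 : η ≤ 1 := by
    have h1 : min T (1-T) ≤ 1 := by linarith
    have h2 : η0 ≤ 1 := by rw [hη0def]; nlinarith
    rw [hηdef]; linarith
  refine ⟨max 1 ((Real.log (1/(ε*η)) + 1)/(2*η0)), lt_of_lt_of_le one_pos (le_max_left _ _), ?_⟩
  intro θ hθM a ⟨ha0, ha1⟩ hG
  have hM1 : (1:ℝ) ≤ |θ| := le_trans (le_max_left _ _) hθM
  have hθne : θ ≠ 0 := by
    intro h; rw [h] at hM1; simp at hM1; linarith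
  have hsbound : η ≤ vfun a (-(|θ| * η0)) := by
    rcases lt_or_gt_of_ne hθne with hneg | hpos
    · have hk := key_neg θs αs θ a η0 (by linarith) (by linarith) hneg ha0 ha1 hη0
      rw [Pminus_eq, hG, ← hT] at hk
      have habs : θ * η0 = -(|θ| * η0) := by rw [abs_of_neg hneg]; ring
      rw [habs] at hk
      have hP : η0 ≤ αs - (αs * T + (1 - αs) * (1 - T)) := by
        rw [hη0def]; nlinarith
      rw [hηdef]; linarith
    · have hk := key_pos θs αs θ a η0 (by linarith) (by linarith) hpos ha0 ha1 hη0
      rw [Pplus_eq, hG, ← hT] at hk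
      have habs : -(θ * η0) = -(|θ| * η0) := by rw [abs_of_pos hpos]
      rw [habs] at hk
      have hP : η0 ≤ αs - (αs * (1 - T) + (1 - αs) * T) := by
        rw [hη0def]; nlinarith
      rw [hηdef]; linarith
  have hw := weight_large ha0 ha1 hη hη1
    (by positivity : (0:ℝ) ≤ |θ| * η0) hsbound
  have hεη : 0 < ε * η := mul_pos hε hη
  have hexp : Real.exp (-(2 * (|θ| * η0))) < ε * η := by
    have h2 : Real.log (1/(ε*η)) + 1 ≤ 2 * (|θ| * η0) := by
      have h3 := le_trans (le_max_right 1 ((Real.log (1/(ε*η)) + 1)/(2*η0))) hθM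
      rw [div_le_iff₀ (by positivity)] at h3
      linarith
    have h4 : -(2 * (|θ| * η0)) < Real.log (ε * η) := by
      rw [one_div, Real.log_inv] at h2; linarith
    calc Real.exp (-(2 * (|θ| * η0))) < Real.exp (Real.log (ε * η)) := Real.exp_lt_exp.2 h4
      _ = ε * η := Real.exp_log hεη
  have hfin : Real.exp (-(2 * (|θ| * η0))) / η < ε := by
    rw [div_lt_iff₀ hη]; linarith
  linarith

/-- the tilted weight tends to one at infinity: for every `ε > 0`
there is `M > 0` such that whenever `|θ| ≥ M` and `a ∈ (0,1)` solves
`G(θ, a) = α*`, one has `a > 1 - ε`. -/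
theorem tilted_weight_tendsto_one
    (θs αs : ℝ) (hθs : 0 < θs) (hαs : 1 / 2 < αs) (hαs1 : αs < 1) :
    ∀ ε > (0 : ℝ), ∃ M > (0 : ℝ), ∀ θ : ℝ, M ≤ |θ| →
      ∀ a ∈ Set.Ioo (0 : ℝ) 1, Gmap θs αs θ a = αs → 1 - ε < a := by
  exact tilted_weight_tendsto_one' θs αs hθs hαs hαs1
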